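/- Let n ≥ 2. For every γ > 0 and every positive integer T, the proportion of a ∈ G(T) satisfying (a₁+⋯+aₙ)^{1+1/(n-1)}/(a₁⋯aₙ)^{1/(n-1)} ≥ γ is at most c(n)·γ^{-(n-1)²/n} for a constant c(n) depending only on n. -/

import Mathlib

open Finset Real

/-- The set of primitive vectors in `{1,...,T}^n`. -/
def GSet (n T : ℕ) : Finset (Fin n → ℕ) :=
  (Fintype.piFinset fun _ : Fin n => Finset.Icc 1 T).filter
    (fun a => Finset.univ.gcd a = 1)

lemma sum_inv_sq_le (T : ℕ) :
    ∑ d ∈ Finset.Icc 2 T, (1:ℝ) / (d:ℝ)^2 ≤ 3/4 := by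
  have key : ∀ T : ℕ, 1 ≤ T →
      ∑ d ∈ Finset.Icc 2 T, (1:ℝ) / (d:ℝ)^2 ≤ 3/4 - 1/(2*T) - 1/(2*(T+1)) := by
    intro T hT
    induction T, hT using Nat.le_induction with
    | base => norm_num
    | succ T hT ih =>
      rw [Finset.sum_Icc_succ_top (by omega)]
      have hT0 : (0:ℝ) < T := by positivity
      have h1 : (1:ℝ) / ((T:ℝ)+1)^2 ≤ 1/(2*T) - 1/(2*((T:ℝ)+1+1)) := by
        rw [div_sub_div _ _ (by positivity) (by positivity)]
        rw [div_le_div_iff₀ (by positivity) (by positivity)]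
        ring_nf
        nlinarith [hT0]
      push_cast
      linarith [ih, h1]
  rcases Nat.lt_or_ge T 1 with h | h
  · interval_cases T <;> norm_num
  · have := key T h
    have h1 : (0:ℝ) < 1/(2*(T:ℝ)) := by positivity
    have h2 : (0:ℝ) < 1/(2*((T:ℝ)+1)) := by positivity
    linarith


-- count of d-divisible tuples
lemma div_count (n T d : ℕ) (hd : 1 ≤ d) :
    ((Fintype.piFinset fun _ : Fin n => Finset.Icc 1 T).filter
      (fun a => ∀ i, d ∣ a i)).card ≤ (T / d) ^ n := by
  have : ((Fintype.piFinset fun _ : Fin n => Finset.Icc 1 (T/d))).card = (T/d)^n := by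
    simp [Fintype.card_piFinset]
  rw [← this]
  apply Finset.card_le_card_of_injOn (fun a i => a i / d)
  · intro a ha
    simp only [Finset.mem_coe, Finset.mem_filter, Fintype.mem_piFinset, Finset.mem_Icc] at ha ⊢
    intro i
    obtain ⟨hbox, hdvd⟩ := ha
    refine ⟨(Nat.one_le_div_iff (by omega)).2
      (Nat.le_of_dvd (by have := (hbox i).1; omega) (hdvd i)),
      Nat.div_le_div_right (hbox i).2⟩
  · intro a ha b hb hab
    simp only [Finset.mem_coe, Finset.mem_filter] at ha hb
    funext i
    have h1 : d * (a i / d) = a i := Nat.mul_div_cancel' (ha.2 i)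
    have h2 : d * (b i / d) = b i := Nat.mul_div_cancel' (hb.2 i)
    have h3 : a i / d = b i / d := congrFun hab i
    rw [← h1, h3, h2]

lemma GSet_card_lb (n T : ℕ) (hn : 2 ≤ n) (hT : 0 < T) :
    (T:ℝ)^n / 4 ≤ ((GSet n T).card : ℝ) := by
  set box := (Fintype.piFinset fun _ : Fin n => Finset.Icc 1 T) with hbox
  have hboxcard : box.card = T ^ n := by simp [hbox, Fintype.card_piFinset]
  have hsplit : (GSet n T).card + (box.filter (fun a => ¬ Finset.univ.gcd a = 1)).card
      = T ^ n := by
    rw [← hboxcard]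
    exact Finset.card_filter_add_card_filter_not _
  -- bound the non-primitive count
  have hsub : box.filter (fun a => ¬ Finset.univ.gcd a = 1) ⊆
      (Finset.Icc 2 T).biUnion (fun d => box.filter (fun a => ∀ i, d ∣ a i)) := by
    intro a ha
    simp only [Finset.mem_filter, Fintype.mem_piFinset, Finset.mem_Icc, hbox] at ha
    obtain ⟨hb, hg⟩ := ha
    set g := Finset.univ.gcd a with hgdef
    have i0 : Fin n := ⟨0, by omega⟩
    have hdvd : ∀ i, g ∣ a i := fun i => Finset.gcd_dvd (Finset.mem_univ i)
    have hgle : g ≤ T := le_trans (Nat.le_of_dvd (by have := (hb i0).1; omega) (hdvd i0)) (hb i0).2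
    have hg1 : 1 ≤ g := Nat.one_le_iff_ne_zero.2 (by
      intro h0
      have := hdvd i0
      rw [h0] at this
      have := Nat.eq_zero_of_zero_dvd this
      have := (hb i0).1; omega)
    have hg2 : 2 ≤ g := by omega
    simp only [Finset.mem_biUnion, Finset.mem_Icc, Finset.mem_filter]
    exact ⟨g, ⟨hg2, hgle⟩, ⟨by simpa [hbox] using hb, hdvd⟩⟩
  have hnp : ((box.filter (fun a => ¬ Finset.univ.gcd a = 1)).card : ℝ)
      ≤ (3/4) * (T:ℝ)^n := by
    calc ((box.filter (fun a => ¬ Finset.univ.gcd a = 1)).card : ℝ)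
        ≤ ∑ d ∈ Finset.Icc 2 T, ((box.filter (fun a => ∀ i, d ∣ a i)).card : ℝ) := by
          exact_mod_cast Nat.cast_le.2 (le_trans (Finset.card_le_card hsub)
            (Finset.card_biUnion_le))
      _ ≤ ∑ d ∈ Finset.Icc 2 T, (T:ℝ)^n * (1 / (d:ℝ)^2) := by
          apply Finset.sum_le_sum
          intro d hd
          simp only [Finset.mem_Icc] at hd
          have h1 : ((box.filter (fun a => ∀ i, d ∣ a i)).card : ℝ) ≤ ((T/d : ℕ) : ℝ)^n := by
            exact_mod_cast div_count n T d (by omega)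
          have h2 : ((T/d : ℕ) : ℝ) ≤ (T:ℝ)/(d:ℝ) := Nat.cast_div_le
          have h3 : ((T/d : ℕ) : ℝ)^n ≤ ((T:ℝ)/(d:ℝ))^n :=
            pow_le_pow_left₀ (by positivity) h2 n
          have hd2 : (2:ℝ) ≤ (d:ℝ) := by exact_mod_cast hd.1
          have h4 : ((T:ℝ)/(d:ℝ))^n = (T:ℝ)^n / (d:ℝ)^n := div_pow _ _ _
          have h5 : (d:ℝ)^2 ≤ (d:ℝ)^n := pow_le_pow_right₀ (by linarith) hn
          have h6 : (T:ℝ)^n / (d:ℝ)^n ≤ (T:ℝ)^n / (d:ℝ)^2 := by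
            apply div_le_div_of_nonneg_left (by positivity) (by positivity) h5
          calc ((box.filter (fun a => ∀ i, d ∣ a i)).card : ℝ)
              ≤ ((T:ℝ)/(d:ℝ))^n := le_trans h1 h3
            _ ≤ (T:ℝ)^n / (d:ℝ)^2 := by rw [h4]; exact h6
            _ = (T:ℝ)^n * (1/(d:ℝ)^2) := by ring
      _ = (T:ℝ)^n * ∑ d ∈ Finset.Icc 2 T, (1 / (d:ℝ)^2) := by rw [Finset.mul_sum]
      _ ≤ (T:ℝ)^n * (3/4) := by
          apply mul_le_mul_of_nonneg_left (sum_inv_sq_le T) (by positivity)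
      _ = (3/4) * (T:ℝ)^n := by ring
  have hcast : ((GSet n T).card : ℝ) + ((box.filter (fun a => ¬ Finset.univ.gcd a = 1)).card : ℝ)
      = (T:ℝ)^n := by exact_mod_cast congrArg (Nat.cast (R := ℝ)) hsplit
  linarith

lemma sum_rpow_le (n : ℕ) (hn : 1 ≤ n) (T : ℕ) :
    ∑ k ∈ Finset.Icc 1 T, (k:ℝ) ^ (-(((n:ℝ)-1)/n)) ≤ (n:ℝ) * (T:ℝ) ^ ((1:ℝ)/(n:ℝ)) := by
  have hn0 : (0:ℝ) < (n:ℝ) := by exact_mod_cast hn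
  induction T with
  | zero =>
    simp only [Finset.Icc_self, Nat.cast_zero]
    norm_num
    positivity
  | succ T ih =>
    rw [Finset.sum_Icc_succ_top (by omega)]
    set x : ℝ := ((T:ℝ) + 1) with hxdef
    have hx : (0:ℝ) < x := by positivity
    have key : x ^ (-(((n:ℝ)-1)/n)) ≤ (n:ℝ) * (x ^ ((1:ℝ)/n) - (T:ℝ) ^ ((1:ℝ)/n)) := by
      have hbern : (1 - 1/x) ^ ((1:ℝ)/n) ≤ 1 - (1/n)*(1/x) := by
        have := rpow_one_add_le_one_add_mul_self
          (s := -(1/x)) (by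
            have : 1/x ≤ 1 := by
              rw [div_le_one hx]; simp [hxdef]
            linarith)
          (p := (1:ℝ)/n) (by positivity) (by
            rw [div_le_one hn0]; exact_mod_cast hn)
        calc (1 - 1/x) ^ ((1:ℝ)/n) = (1 + -(1/x)) ^ ((1:ℝ)/n) := by ring_nf
          _ ≤ 1 + (1/n) * -(1/x) := this
          _ = 1 - (1/n)*(1/x) := by ring
      have hTx : (T:ℝ) = x * (1 - 1/x) := by rw [hxdef]; field_simp; ring
      have h1x : (0:ℝ) ≤ 1 - 1/x := by
        have : 1/x ≤ 1 := by
          rw [div_le_one hx]; simp [hxdef]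
        linarith
      have hT : (T:ℝ) ^ ((1:ℝ)/n) ≤ x ^ ((1:ℝ)/n) * (1 - (1/n)*(1/x)) := by
        rw [hTx, Real.mul_rpow hx.le h1x]
        exact mul_le_mul_of_nonneg_left hbern (Real.rpow_nonneg hx.le _)
      have hxs : x ^ (-(((n:ℝ)-1)/n)) = x ^ ((1:ℝ)/n) / x := by
        have : -(((n:ℝ)-1)/n) = (1:ℝ)/n - 1 := by field_simp; ring
        rw [this, Real.rpow_sub hx, Real.rpow_one]
      rw [hxs]
      have h2 : (n:ℝ) * (x ^ ((1:ℝ)/n) - (T:ℝ) ^ ((1:ℝ)/n))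
          ≥ (n:ℝ) * (x ^ ((1:ℝ)/n) - x ^ ((1:ℝ)/n) * (1 - (1/n)*(1/x))) := by
        apply mul_le_mul_of_nonneg_left _ hn0.le
        linarith
      have h3 : (n:ℝ) * (x ^ ((1:ℝ)/n) - x ^ ((1:ℝ)/n) * (1 - (1/n)*(1/x)))
          = x ^ ((1:ℝ)/n) / x := by field_simp; ring
      linarith
    have hcast : ((T+1 : ℕ) : ℝ) = x := by push_cast [hxdef]; ring
    rw [hcast]
    linarith

theorem stmt_13 (n : ℕ) (hn : 2 ≤ n) :
    ∃ c : ℝ, ∀ γ : ℝ, 0 < γ → ∀ T : ℕ, 0 < T →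
      (((GSet n T).filter (fun a =>
          γ ≤ (∑ i, (a i : ℝ)) ^ (1 + 1 / ((n : ℝ) - 1)) /
                (∏ i, (a i : ℝ)) ^ (1 / ((n : ℝ) - 1)))).card : ℝ) /
        ((GSet n T).card : ℝ) ≤
      c * γ ^ (-(((n : ℝ) - 1) ^ 2 / n)) := by
  classical
  refine ⟨4 * (n:ℝ) ^ (2*n), ?_⟩
  intro γ hγ T hT
  set nn : ℝ := (n:ℝ) with hnn
  have hnn2 : (2:ℝ) ≤ nn := by rw [hnn]; exact_mod_cast hn
  have hnn0 : (0:ℝ) < nn := by linarith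
  have hnn1 : (0:ℝ) < nn - 1 := by linarith
  set s : ℝ := (nn - 1) / nn with hs
  have hs0 : 0 < s := by positivity
  set e : ℝ := (nn - 1)^2 / nn with he
  set F := (GSet n T).filter (fun a =>
      γ ≤ (∑ i, (a i : ℝ)) ^ (1 + 1 / (nn - 1)) /
            (∏ i, (a i : ℝ)) ^ (1 / (nn - 1))) with hF
  set box := (Fintype.piFinset fun _ : Fin n => Finset.Icc 1 T) with hbox
  have hFsub : F ⊆ box := by
    intro a ha
    have := Finset.mem_of_mem_filter a ha
    exact Finset.mem_of_mem_filter a this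
  set M : ℝ := (nn * T) ^ n * (γ ^ (n-1))⁻¹ with hM
  have hM0 : 0 < M := by positivity
  -- Step 1: product bound on F
  have hProd : ∀ a ∈ F, (∏ i, (a i : ℝ)) ≤ M := by
    intro a ha
    have hamem : a ∈ box := hFsub ha
    simp only [hbox, Fintype.mem_piFinset, Finset.mem_Icc] at hamem
    have haP : ∀ i, (1:ℝ) ≤ (a i : ℝ) := fun i => by exact_mod_cast (hamem i).1
    have haT : ∀ i, (a i : ℝ) ≤ (T:ℝ) := fun i => by exact_mod_cast (hamem i).2
    set P : ℝ := ∏ i, (a i : ℝ) with hPd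
    set S : ℝ := ∑ i, (a i : ℝ) with hSd
    have hP0 : 0 < P := Finset.prod_pos (fun i _ => by linarith [haP i])
    have hS0 : 0 < S := by
      have : (0:ℝ) < ∑ _i : Fin n, (1:ℝ) := by
        simp; omega
      calc (0:ℝ) < ∑ _i : Fin n, (1:ℝ) := this
        _ ≤ S := Finset.sum_le_sum (fun i _ => haP i)
    have hST : S ≤ nn * T := by
      calc S ≤ ∑ _i : Fin n, (T:ℝ) := Finset.sum_le_sum (fun i _ => haT i)
        _ = nn * T := by simp [mul_comm, hnn]
    have hfil : γ ≤ S ^ (1 + 1 / (nn - 1)) / P ^ (1 / (nn - 1)) :=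
      (Finset.mem_filter.1 ha).2
    have hexp : 1 + 1 / (nn - 1) = nn / (nn - 1) := by field_simp; ring
    have h1 : γ * P ^ (1 / (nn - 1)) ≤ S ^ (nn / (nn - 1)) := by
      rw [← hexp]
      have hPr : 0 < P ^ (1 / (nn - 1)) := Real.rpow_pos_of_pos hP0 _
      calc γ * P ^ (1 / (nn - 1))
          ≤ (S ^ (1 + 1 / (nn - 1)) / P ^ (1 / (nn - 1))) * P ^ (1 / (nn - 1)) :=
            mul_le_mul_of_nonneg_right hfil hPr.le
        _ = S ^ (1 + 1 / (nn - 1)) := by field_simp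
    have h2 : (γ * P ^ (1 / (nn - 1))) ^ (nn - 1) ≤ (S ^ (nn / (nn - 1))) ^ (nn - 1) :=
      Real.rpow_le_rpow (by positivity) h1 hnn1.le
    have hL : (γ * P ^ (1 / (nn - 1))) ^ (nn - 1) = γ ^ (nn - 1) * P := by
      rw [Real.mul_rpow hγ.le (Real.rpow_nonneg hP0.le _), ← Real.rpow_mul hP0.le]
      congr 1
      rw [show (1 / (nn - 1)) * (nn - 1) = 1 by field_simp]
      exact Real.rpow_one P
    have hR : (S ^ (nn / (nn - 1))) ^ (nn - 1) = S ^ (n:ℕ) := by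
      rw [← Real.rpow_mul hS0.le]
      rw [show (nn / (nn - 1)) * (nn - 1) = nn by field_simp]
      exact Real.rpow_natCast S n
    rw [hL, hR] at h2
    have hγpow : γ ^ (nn - 1) = γ ^ ((n:ℕ)-1 : ℕ) := by
      rw [← Real.rpow_natCast γ (n-1)]
      congr 1
      push_cast [Nat.cast_sub (by omega : 1 ≤ n)]
      ring
    rw [hγpow] at h2
    have hSn : S ^ (n:ℕ) ≤ (nn * T) ^ n :=
      pow_le_pow_left₀ hS0.le hST n
    have h3 : γ ^ ((n:ℕ)-1 : ℕ) * P ≤ (nn * T) ^ n := le_trans h2 hSn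
    have hγp : 0 < γ ^ (n-1) := by positivity
    rw [hM, ← div_eq_mul_inv, le_div_iff₀ hγp]
    calc P * γ ^ (n-1) = γ ^ (n-1) * P := by ring
      _ ≤ (nn * T) ^ n := h3
  -- Step 2: each filtered term is at least 1
  have hterm : ∀ a ∈ F, (1:ℝ) ≤ M ^ s * ∏ i, (a i : ℝ) ^ (-s) := by
    intro a ha
    have hamem : a ∈ box := hFsub ha
    simp only [hbox, Fintype.mem_piFinset, Finset.mem_Icc] at hamem
    have haP : ∀ i, (1:ℝ) ≤ (a i : ℝ) := fun i => by exact_mod_cast (hamem i).1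
    have hP0 : 0 < ∏ i, (a i : ℝ) := Finset.prod_pos (fun i _ => by linarith [haP i])
    have hprodeq : ∏ i, (a i : ℝ) ^ (-s) = (∏ i, (a i : ℝ)) ^ (-s) :=
      Real.finset_prod_rpow Finset.univ _ (fun i _ => by linarith [haP i]) (-s)
    rw [hprodeq, Real.rpow_neg hP0.le]
    have hMP : 1 ≤ M / (∏ i, (a i : ℝ)) := (one_le_div hP0).2 (hProd a ha)
    have : (1:ℝ) = 1 ^ s := (Real.one_rpow s).symm
    calc (1:ℝ) = 1 ^ s := (Real.one_rpow s).symm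
      _ ≤ (M / (∏ i, (a i : ℝ))) ^ s := Real.rpow_le_rpow (by norm_num) hMP hs0.le
      _ = M ^ s / (∏ i, (a i : ℝ)) ^ s := Real.div_rpow hM0.le hP0.le _
      _ = M ^ s * ((∏ i, (a i : ℝ)) ^ s)⁻¹ := by ring
  -- Step 3: counting
  have hcount : (F.card : ℝ) ≤ M ^ s * (∑ k ∈ Finset.Icc 1 T, (k:ℝ) ^ (-s)) ^ n := by
    calc (F.card : ℝ) = ∑ _a ∈ F, (1:ℝ) := by simp
      _ ≤ ∑ a ∈ F, M ^ s * ∏ i, (a i:ℝ)^(-s) := Finset.sum_le_sum hterm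
      _ ≤ ∑ a ∈ box, M ^ s * ∏ i, (a i:ℝ)^(-s) :=
          Finset.sum_le_sum_of_subset_of_nonneg hFsub (fun a _ _ => by positivity)
      _ = M ^ s * ∑ a ∈ box, ∏ i, (a i:ℝ)^(-s) := by rw [← Finset.mul_sum]
      _ = M ^ s * ∏ _i : Fin n, ∑ k ∈ Finset.Icc 1 T, (k:ℝ)^(-s) := by
          rw [Finset.prod_univ_sum]
      _ = M ^ s * (∑ k ∈ Finset.Icc 1 T, (k:ℝ)^(-s)) ^ n := by
          rw [Finset.prod_const, Finset.card_univ, Fintype.card_fin]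
  -- Step 4: evaluate the sum and M ^ s
  have hsum' : ∑ k ∈ Finset.Icc 1 T, (k:ℝ)^(-s) ≤ nn * (T:ℝ)^((1:ℝ)/nn) :=
    sum_rpow_le n (by omega) T
  have hsumnn : (0:ℝ) ≤ ∑ k ∈ Finset.Icc 1 T, (k:ℝ)^(-s) :=
    Finset.sum_nonneg (fun k _ => Real.rpow_nonneg (Nat.cast_nonneg k) _)
  have hpow : (nn * (T:ℝ)^((1:ℝ)/nn))^n = nn^n * T := by
    rw [mul_pow]
    congr 1
    rw [← Real.rpow_natCast ((T:ℝ)^((1:ℝ)/nn)) n, ← Real.rpow_mul (Nat.cast_nonneg T),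
      show (1:ℝ)/nn * (n:ℝ) = 1 from by rw [hnn]; field_simp, Real.rpow_one]
  have hsumpow : (∑ k ∈ Finset.Icc 1 T, (k:ℝ)^(-s)) ^ n ≤ nn^n * T := by
    rw [← hpow]
    exact pow_le_pow_left₀ hsumnn hsum' n
  have hMs : M ^ s = (nn*(T:ℝ))^(n-1) * γ ^ (-e) := by
    rw [hM, Real.mul_rpow (by positivity) (by positivity)]
    congr 1
    · rw [← Real.rpow_natCast (nn*(T:ℝ)) n, ← Real.rpow_mul (by positivity),
        show (n:ℝ) * s = ((n-1 : ℕ):ℝ) from by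
          push_cast [Nat.cast_sub (by omega : 1 ≤ n)]
          rw [hs, hnn]; field_simp,
        Real.rpow_natCast]
    · rw [← Real.rpow_natCast γ (n-1), ← Real.rpow_neg hγ.le, ← Real.rpow_mul hγ.le]
      congr 1
      rw [hs, he, hnn]
      push_cast [Nat.cast_sub (by omega : 1 ≤ n)]
      field_simp
  -- Step 5: conclude
  have hGlb := GSet_card_lb n T hn hT
  have hG0 : (0:ℝ) < ((GSet n T).card : ℝ) := lt_of_lt_of_le (by positivity) hGlb
  rw [div_le_iff₀ hG0]
  have hγe : (0:ℝ) ≤ γ ^ (-e) := Real.rpow_nonneg hγ.le _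
  have hfact : (nn*(T:ℝ))^(n-1) * (nn^n * (T:ℝ)) = nn^(2*n-1) * (T:ℝ)^n := by
    obtain ⟨m, rfl⟩ : ∃ m, n = m + 1 := ⟨n-1, by omega⟩
    simp only [Nat.add_sub_cancel, show 2*(m+1)-1 = 2*m+1 from by omega]
    ring
  have hnn1' : (1:ℝ) ≤ nn := by linarith
  calc (F.card : ℝ)
      ≤ M ^ s * (nn^n * (T:ℝ)) := by
        refine le_trans hcount (mul_le_mul_of_nonneg_left hsumpow (Real.rpow_nonneg hM0.le s))
    _ = nn^(2*n-1) * (T:ℝ)^n * γ ^ (-e) := by rw [hMs]; rw [← hfact]; ring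
    _ ≤ nn^(2*n) * (T:ℝ)^n * γ ^ (-e) := by
        have : nn^(2*n-1) ≤ nn^(2*n) := pow_le_pow_right₀ hnn1' (by omega)
        have hTn : (0:ℝ) ≤ (T:ℝ)^n := by positivity
        nlinarith [mul_le_mul_of_nonneg_right this hTn, hγe, hTn]
    _ = 4 * nn^(2*n) * γ ^ (-e) * ((T:ℝ)^n / 4) := by ring
    _ ≤ 4 * nn^(2*n) * γ ^ (-e) * ((GSet n T).card : ℝ) := by
        apply mul_le_mul_of_nonneg_left hGlb
        positivity
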